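/- Under the same setup (P* row-stochastic, φ stationary for P*, s > 0, e the all-ones vector, and assuming (e^{D0 s} P*)ᵏ → 0 as k → ∞ so that I - e^{D0 s} P* is invertible), define P(L = 0) = 1 - φ e^{D0 s} e and, for n ≥ 1, P(L = n) = φ (e^{D0 s} P*)ⁿ (I - e^{D0 s}) P* e. Then ∑_{n=0}^∞ P(L = n) = 1. -/

import Mathlib

open Matrix Filter

lemma aux_summable_norm_pow {R : Type*} [NormedRing R] (x : R)
    (h : Tendsto (fun k : ℕ => x ^ k) atTop (nhds 0)) :
    Summable fun k : ℕ => ‖x ^ k‖ := by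
  obtain ⟨N, hN⟩ := (Metric.tendsto_atTop.mp h (1/2) (by norm_num))
  set M : ℕ := N + 1 with hMdef
  have hMpos : 0 < M := Nat.succ_pos _
  have hM : ‖x ^ M‖ ≤ 1/2 := by
    have := hN M (Nat.le_succ N)
    simpa [dist_eq_norm] using this.le
  set C : ℝ := ∑ r ∈ Finset.range M, ‖x ^ r‖ with hCdef
  have hC0 : 0 ≤ C := Finset.sum_nonneg fun _ _ => norm_nonneg _
  have hC : ∀ r < M, ‖x ^ r‖ ≤ C := fun r hr =>
    Finset.single_le_sum (fun i _ => norm_nonneg _) (Finset.mem_range.mpr hr)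
  have key : ∀ m : ℕ, ‖x ^ m‖ ≤ (1/2 : ℝ) ^ (m / M) * C := by
    intro m
    rcases Nat.lt_or_ge m M with hm | hm
    · have : m / M = 0 := Nat.div_eq_of_lt hm
      simpa [this] using hC m hm
    · have hq : 0 < m / M := Nat.div_pos hm hMpos
      have hdecomp : M * (m / M) + m % M = m := Nat.div_add_mod m M
      calc ‖x ^ m‖ = ‖(x ^ M) ^ (m / M) * x ^ (m % M)‖ := by
            rw [← pow_mul, ← pow_add, hdecomp]
        _ ≤ ‖(x ^ M) ^ (m / M)‖ * ‖x ^ (m % M)‖ := norm_mul_le _ _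
        _ ≤ ‖x ^ M‖ ^ (m / M) * C := by
            apply mul_le_mul (norm_pow_le' _ hq) (hC _ (Nat.mod_lt _ hMpos))
              (norm_nonneg _) (pow_nonneg (norm_nonneg _) _)
        _ ≤ (1/2 : ℝ) ^ (m / M) * C := by
            apply mul_le_mul_of_nonneg_right _ hC0
            exact pow_le_pow_left₀ (norm_nonneg _) hM _
  -- compare with a geometric series via rpow
  set ρ : ℝ := (1/2 : ℝ) ^ (1/(M:ℝ)) with hρdef
  have hρ0 : 0 ≤ ρ := Real.rpow_nonneg (by norm_num) _
  have hρ1 : ρ < 1 := Real.rpow_lt_one (by norm_num) (by norm_num)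
      (by positivity)
  have hgeom : ∀ m : ℕ, (1/2 : ℝ) ^ (m / M) ≤ 2 * ρ ^ m := by
    intro m
    have h1 : ρ ^ m = (1/2 : ℝ) ^ ((m : ℝ)/(M : ℝ)) := by
      rw [hρdef, ← Real.rpow_natCast _ m, ← Real.rpow_mul (by norm_num)]
      ring_nf
    have h2 : ((m : ℝ)/(M : ℝ)) ≤ ((m / M : ℕ) : ℝ) + 1 := by
      rw [div_le_iff₀ (by positivity)]
      have : m < M * (m / M) + M := by
        conv_lhs => rw [← Nat.div_add_mod m M]
        exact Nat.add_lt_add_left (Nat.mod_lt _ hMpos) _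
      have := (Nat.cast_lt (α := ℝ)).mpr this
      push_cast at this ⊢
      nlinarith
    have h3 : (1/2 : ℝ) ^ (((m / M : ℕ) : ℝ) + 1) ≤ (1/2 : ℝ) ^ ((m : ℝ)/(M : ℝ)) :=
      Real.rpow_le_rpow_of_exponent_ge (by norm_num) (by norm_num) h2
    have h4 : (1/2 : ℝ) ^ (((m / M : ℕ) : ℝ) + 1) = (1/2 : ℝ) ^ (m / M) * (1/2) := by
      rw [Real.rpow_add (by norm_num), Real.rpow_natCast, Real.rpow_one]
    rw [h1]
    nlinarith [h3, h4]
  apply Summable.of_nonneg_of_le (fun m => norm_nonneg _)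
    (fun m => (key m).trans (mul_le_mul_of_nonneg_right (hgeom m) hC0))
  have : Summable (fun m : ℕ => ρ ^ m) := summable_geometric_of_lt_one hρ0 hρ1
  exact ((this.mul_left 2).mul_right C)

/-- Proposition 2 (long spells): with `P*` row-stochastic, `φ` a stationary probability
vector, `E = exp(s D0)` and `(E P*)^k → 0`, the numbers `P(L = 0) = 1 - φ E e` and
`P(L = n) = φ (E P*)ⁿ (I - E) P* e` (for `n ≥ 1`) sum to `1`. -/
theorem stmt_4 {n : ℕ} (Pstar : Matrix (Fin n) (Fin n) ℝ) (φ : Fin n → ℝ)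
    (D0 : Matrix (Fin n) (Fin n) ℝ) (s : ℝ) (hs : 0 < s)
    (hPnonneg : ∀ i j, 0 ≤ Pstar i j) (hProws : ∀ i, ∑ j, Pstar i j = 1)
    (hφnonneg : ∀ i, 0 ≤ φ i) (hφsum : ∑ i, φ i = 1)
    (hφstat : Matrix.vecMul φ Pstar = φ)
    (hQ : Tendsto (fun k : ℕ => (NormedSpace.exp (s • D0) * Pstar) ^ k)
      atTop (nhds 0)) :
    HasSum
      (fun m : ℕ =>
        if m = 0 then 1 - φ ⬝ᵥ (NormedSpace.exp (s • D0) *ᵥ (fun _ => (1 : ℝ)))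
        else φ ⬝ᵥ (((NormedSpace.exp (s • D0) * Pstar) ^ m *
          ((1 - NormedSpace.exp (s • D0)) * Pstar)) *ᵥ (fun _ => (1 : ℝ))))
      1 := by
  set E : Matrix (Fin n) (Fin n) ℝ := NormedSpace.exp (s • D0) with hE
  set Q : Matrix (Fin n) (Fin n) ℝ := E * Pstar with hQdef
  set e : Fin n → ℝ := fun _ => (1 : ℝ) with he
  set f : ℕ → ℝ := fun m =>
    if m = 0 then 1 - φ ⬝ᵥ (E *ᵥ e)
    else φ ⬝ᵥ ((Q ^ m * ((1 - E) * Pstar)) *ᵥ e) with hfdef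
  -- P* e = e
  have hPe : Pstar *ᵥ e = e := by
    funext i
    simp [Matrix.mulVec, dotProduct, he, hProws i]
  set w : Fin n → ℝ := e - E *ᵥ e with hw
  set a : ℕ → ℝ := fun m => φ ⬝ᵥ ((Q ^ m) *ᵥ e) with ha
  have ha0 : a 0 = 1 := by
    simp [ha, dotProduct, he, hφsum]
  -- uniform formula : f m = φ ⬝ᵥ (Q^m *ᵥ w)
  have hfw : ∀ m, f m = φ ⬝ᵥ ((Q ^ m) *ᵥ w) := by
    intro m
    rcases Nat.eq_zero_or_pos m with hm | hm
    · subst hm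
      have h1 : φ ⬝ᵥ e = 1 := by simp [dotProduct, he, hφsum]
      simp only [hfdef, if_pos rfl, pow_zero, Matrix.one_mulVec, hw, dotProduct_sub, h1]
    · have hmne : m ≠ 0 := hm.ne'
      have : (Q ^ m * ((1 - E) * Pstar)) *ᵥ e = (Q ^ m) *ᵥ w := by
        rw [← Matrix.mulVec_mulVec, ← Matrix.mulVec_mulVec, hPe, hw,
          Matrix.sub_mulVec, Matrix.one_mulVec]
      simp [hfdef, hmne, this]
  -- telescoping formula : f m = a m - a (m+1)
  have htel : ∀ m, f m = a m - a (m + 1) := by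
    intro m
    rw [hfw]
    have : (Q ^ (m + 1)) *ᵥ e = (Q ^ m) *ᵥ (E *ᵥ e) := by
      rw [pow_succ, ← Matrix.mulVec_mulVec, hQdef, ← Matrix.mulVec_mulVec, hPe]
    simp [ha, this, hw, Matrix.mulVec_sub, dotProduct_sub]
  -- the matrix-to-CLM algebra map
  set G : Matrix (Fin n) (Fin n) ℝ →ₗ[ℝ] ((Fin n → ℝ) →L[ℝ] (Fin n → ℝ)) :=
    (LinearMap.toContinuousLinearMap.toLinearMap.comp Matrix.toLin'.toLinearMap) with hG
  have hGapp : ∀ (M : Matrix (Fin n) (Fin n) ℝ) (v : Fin n → ℝ), G M v = M *ᵥ v := by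
    intro M v
    simp [hG, Matrix.toLin'_apply]
  set T : (Fin n → ℝ) →L[ℝ] (Fin n → ℝ) := G Q with hT
  have hTpow : ∀ (m : ℕ) (v : Fin n → ℝ), (T ^ m) v = (Q ^ m) *ᵥ v := by
    intro m
    induction m with
    | zero => intro v; simp [Matrix.one_mulVec]
    | succ k ih =>
      intro v
      rw [pow_succ, ContinuousLinearMap.mul_apply, hT, hGapp, ih, Matrix.mulVec_mulVec,
        ← pow_succ]
  have hGpow : ∀ m : ℕ, G (Q ^ m) = T ^ m := by
    intro m
    ext v
    rw [hGapp, ← hTpow]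
  -- T^m → 0
  have hGcont : Continuous G := G.continuous_of_finiteDimensional
  have hTtend : Tendsto (fun m : ℕ => T ^ m) atTop (nhds 0) := by
    have := (hGcont.tendsto 0).comp hQ
    simp only [Function.comp_def, map_zero] at this
    simpa [hGpow] using this
  have hsummable : Summable fun m : ℕ => ‖(T : (Fin n → ℝ) →L[ℝ] (Fin n → ℝ)) ^ m‖ :=
    aux_summable_norm_pow T hTtend
  -- bound |f m|
  set K : ℝ := (∑ i, |φ i|) * ‖w‖ with hK
  have hK0 : 0 ≤ K := mul_nonneg (Finset.sum_nonneg fun _ _ => abs_nonneg _) (norm_nonneg _)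
  have hbound : ∀ m, ‖f m‖ ≤ K * ‖(T ^ m : (Fin n → ℝ) →L[ℝ] (Fin n → ℝ))‖ := by
    intro m
    rw [hfw, ← hTpow]
    calc ‖φ ⬝ᵥ ((T ^ m) w)‖ ≤ ∑ i, |φ i| * ‖(T ^ m) w‖ := by
          rw [Real.norm_eq_abs]
          refine (Finset.abs_sum_le_sum_abs _ _).trans (Finset.sum_le_sum fun i _ => ?_)
          rw [abs_mul]
          have hpi := norm_le_pi_norm ((T ^ m) w) i
          rw [Real.norm_eq_abs] at hpi
          exact mul_le_mul_of_nonneg_left hpi (abs_nonneg _)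
      _ = (∑ i, |φ i|) * ‖(T ^ m) w‖ := by rw [← Finset.sum_mul]
      _ ≤ (∑ i, |φ i|) * (‖(T ^ m : (Fin n → ℝ) →L[ℝ] (Fin n → ℝ))‖ * ‖w‖) := by
          exact mul_le_mul_of_nonneg_left ((T ^ m).le_opNorm w)
            (Finset.sum_nonneg fun _ _ => abs_nonneg _)
      _ = K * ‖(T ^ m : (Fin n → ℝ) →L[ℝ] (Fin n → ℝ))‖ := by rw [hK]; ring
  have hfsummable : Summable f :=
    Summable.of_norm_bounded (hsummable.mul_left K) hbound
  -- a m → 0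
  have hatend : Tendsto a atTop (nhds 0) := by
    have hcont : Continuous fun M : Matrix (Fin n) (Fin n) ℝ => φ ⬝ᵥ (M *ᵥ e) := by
      simp only [dotProduct, Matrix.mulVec]
      apply continuous_finset_sum
      intro i _
      apply Continuous.mul continuous_const
      apply continuous_finset_sum
      intro j _
      exact (continuous_id.matrix_elem i j).mul continuous_const
    have := (hcont.tendsto 0).comp hQ
    simpa [Function.comp_def, Matrix.zero_mulVec, dotProduct_zero, ha] using this
  -- conclude
  have hhs : HasSum f (∑' m, f m) := hfsummable.hasSum
  have hps : Tendsto (fun N => ∑ m ∈ Finset.range N, f m) atTop (nhds (∑' m, f m)) :=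
    hhs.tendsto_sum_nat
  have hps1 : Tendsto (fun N => ∑ m ∈ Finset.range N, f m) atTop (nhds 1) := by
    have : (fun N => ∑ m ∈ Finset.range N, f m) = fun N => a 0 - a N := by
      funext N
      simp only [htel]
      exact Finset.sum_range_sub' a N
    rw [this, ha0]
    simpa using tendsto_const_nhds.sub hatend
  have : (∑' m, f m) = 1 := tendsto_nhds_unique hps hps1
  rw [← this]
  exact hhs
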